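/- arXiv:2101.03153 — 5 statements merged into one kernel-verified Lean document; each statement's English description precedes it below -/
import Mathlib

section
/- Let K be an R-submodule of M and let U_max be the supremum, in the lattice of R-submodules of M, of all submodules N of M such that N ⊆ K and D(N) ⊆ N. Then U_max ⊆ K, D(U_max) ⊆ U_max, and for every α ∈ M one has α ∈ U_max if and only if D^[i](α) ∈ K for every i ≥ 0. (This is the abstract algebraic form of Theorem 2.5 of the paper: a section lies in the maximal D-stable submodule contained in K exactly when all of its iterated derivatives lie in K.) -/
/-- abstract form of Theorem 2.5.
`R` is a commutative ring, `δ : R → R` a derivation, `M` an `R`-module and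
`D : M → M` an additive map satisfying the Leibniz rule with respect to `δ`.
`K` is a submodule of `M` and `Umax` is the supremum of all submodules `N ⊆ K`
with `D(N) ⊆ N`.  Then `Umax ⊆ K`, `D(Umax) ⊆ Umax`, and `α ∈ Umax` iff all
iterated derivatives `D^[i] α` lie in `K`. -/
theorem flat_submodule_eq_iterated_kernel
    {R M : Type*} [CommRing R] [AddCommGroup M] [Module R M]
    (δ : R → R)
    (hδadd : ∀ r s : R, δ (r + s) = δ r + δ s)
    (hδmul : ∀ r s : R, δ (r * s) = δ r * s + r * δ s)
    (D : M → M)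
    (hDadd : ∀ m n : M, D (m + n) = D m + D n)
    (hDsmul : ∀ (r : R) (m : M), D (r • m) = δ r • m + r • D m)
    (K : Submodule R M)
    (Umax : Submodule R M)
    (hUmax : Umax = sSup {N : Submodule R M | N ≤ K ∧ ∀ x ∈ N, D x ∈ N}) :
    Umax ≤ K ∧ (∀ x ∈ Umax, D x ∈ Umax) ∧
      (∀ α : M, α ∈ Umax ↔ ∀ i : ℕ, D^[i] α ∈ K) := by
  -- iterates are additive
  have hiter_add : ∀ (i : ℕ) (m n : M), D^[i] (m + n) = D^[i] m + D^[i] n := by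
    intro i
    induction i with
    | zero => intro m n; simp
    | succ i ih =>
      intro m n
      simp only [Function.iterate_succ_apply, hDadd]
      exact ih _ _
  have hD0 : D 0 = (0 : M) := by
    have h := hDadd 0 0
    rw [add_zero] at h
    exact right_eq_add.mp h
  have hiter_zero : ∀ i : ℕ, D^[i] (0 : M) = 0 := by
    intro i
    induction i with
    | zero => simp
    | succ i ih => simp [Function.iterate_succ_apply, hD0, ih]
  -- key: all iterates of a smul stay in K if all iterates of the vector do
  have key : ∀ (i : ℕ) (r : R) (α : M), (∀ j : ℕ, D^[j] α ∈ K) →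
      D^[i] (r • α) ∈ K := by
    intro i
    induction i with
    | zero => intro r α h; exact K.smul_mem r (h 0)
    | succ i ih =>
      intro r α h
      rw [Function.iterate_succ_apply, hDsmul, hiter_add]
      refine K.add_mem (ih (δ r) α h) (ih r (D α) ?_)
      intro j
      have hj := h (j + 1)
      rwa [Function.iterate_succ_apply] at hj
  -- W : the submodule of vectors all of whose iterated derivatives lie in K
  let W : Submodule R M :=
    { carrier := {α | ∀ i : ℕ, D^[i] α ∈ K}
      zero_mem' := by intro i; simp [hiter_zero i]
      add_mem' := by
        intro a b ha hb i
        rw [hiter_add]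
        exact K.add_mem (ha i) (hb i)
      smul_mem' := by
        intro r α hα i
        exact key i r α hα }
  have hWmem : W ∈ {N : Submodule R M | N ≤ K ∧ ∀ x ∈ N, D x ∈ N} := by
    constructor
    · intro x hx
      simpa using hx 0
    · intro x hx i
      have hi := hx (i + 1)
      rwa [Function.iterate_succ_apply] at hi
  have hUW : Umax = W := by
    rw [hUmax]
    apply le_antisymm
    · apply sSup_le
      rintro N ⟨hNK, hND⟩ x hx
      intro i
      apply hNK
      induction i with
      | zero => simpa using hx
      | succ i ih =>
        have : D^[i] x ∈ N := ih
        rw [Function.iterate_succ_apply']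
        exact hND _ this
    · exact le_sSup hWmem
  refine ⟨?_, ?_, ?_⟩
  · rw [hUW]; exact hWmem.1
  · rw [hUW]; exact hWmem.2
  · intro α; rw [hUW]; exact Iff.rfl
end

section
/- Let η : M → M' be an R-linear map, set K := {m ∈ M : η(m) = 0}, and let U_max be the supremum, in the lattice of R-submodules of M, of all submodules N of M such that N ⊆ K and D(N) ⊆ N. Then for every α ∈ M one has α ∈ U_max if and only if η^{(k)}(α) = 0 for all k ≥ 1. (This is the abstract algebraic form of Theorem 2.8 of the paper, characterizing the maximal D-stable submodule of the kernel of the Higgs field by the vanishing of all the operators η^{(k)}.) -/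
/-- abstract form of Theorem 2.8.
`η : M →ₗ[R] M'` is an `R`-linear map, `K = ker η`, and `Umax` is the supremum
of all submodules `N ⊆ K` with `D(N) ⊆ N`.  The maps `η^{(k)}` (here `eta k`
for `k ≥ 1`) are defined recursively by `η^{(1)} = η` and
`η^{(k+1)} = D' ∘ η^{(k)} − η^{(k)} ∘ D`.  Then `α ∈ Umax` iff `η^{(k)}(α) = 0`
for all `k ≥ 1`. -/
theorem mem_flat_submodule_iff_etas_vanish
    {R M M' : Type*} [CommRing R] [AddCommGroup M] [Module R M]
    [AddCommGroup M'] [Module R M']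
    (δ : R → R)
    (hδadd : ∀ r s : R, δ (r + s) = δ r + δ s)
    (hδmul : ∀ r s : R, δ (r * s) = δ r * s + r * δ s)
    (D : M → M)
    (hDadd : ∀ m n : M, D (m + n) = D m + D n)
    (hDsmul : ∀ (r : R) (m : M), D (r • m) = δ r • m + r • D m)
    (D' : M' → M')
    (hD'add : ∀ m n : M', D' (m + n) = D' m + D' n)
    (hD'smul : ∀ (r : R) (m : M'), D' (r • m) = δ r • m + r • D' m)
    (η : M →ₗ[R] M')
    (eta : ℕ → M → M')
    (heta1 : ∀ m : M, eta 1 m = η m)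
    (hetarec : ∀ k : ℕ, 1 ≤ k → ∀ m : M,
      eta (k + 1) m = D' (eta k m) - eta k (D m))
    (Umax : Submodule R M)
    (hUmax : Umax =
      sSup {N : Submodule R M | N ≤ LinearMap.ker η ∧ ∀ x ∈ N, D x ∈ N}) :
    ∀ α : M, α ∈ Umax ↔ ∀ k : ℕ, 1 ≤ k → eta k α = 0 := by

  classical
  -- basic facts
  have hD0 : D 0 = 0 := by
    have h := hDadd 0 0
    rw [add_zero] at h
    exact (right_eq_add.mp h)
  have hD'0 : D' 0 = 0 := by
    have h := hD'add 0 0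
    rw [add_zero] at h
    exact (right_eq_add.mp h)
  -- iterates are additive / send 0 to 0
  have hiter0 : ∀ i : ℕ, D^[i] (0 : M) = 0 := by
    intro i
    induction i with
    | zero => simp
    | succ i ih => rw [Function.iterate_succ_apply', ih, hD0]
  have hiteradd : ∀ (i : ℕ) (m n : M), D^[i] (m + n) = D^[i] m + D^[i] n := by
    intro i
    induction i with
    | zero => simp
    | succ i ih =>
      intro m n
      rw [Function.iterate_succ_apply', ih, hDadd, Function.iterate_succ_apply',
        Function.iterate_succ_apply']
  -- closure of the vanishing condition under scalar multiplication
  have hsmulkey : ∀ (r : R) (m : M), (∀ i : ℕ, η (D^[i] m) = 0) →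
      ∀ i : ℕ, η (D^[i] (r • m)) = 0 := by
    intro r m hm
    set S : Submodule R M := Submodule.span R (Set.range fun i : ℕ => D^[i] m) with hS
    have hSD : ∀ x ∈ S, D x ∈ S := by
      intro x hx
      induction hx using Submodule.span_induction with
      | mem x hx =>
        obtain ⟨i, rfl⟩ := hx
        exact Submodule.subset_span ⟨i + 1, Function.iterate_succ_apply' D i m⟩
      | zero => rw [hD0]; exact S.zero_mem
      | add x y hx hy ihx ihy => rw [hDadd]; exact S.add_mem ihx ihy
      | smul r x hx ih =>
        rw [hDsmul]
        exact S.add_mem (S.smul_mem _ hx) (S.smul_mem _ ih)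
    have hSker : S ≤ LinearMap.ker η := by
      rw [hS, Submodule.span_le]
      rintro x ⟨i, rfl⟩
      exact hm i
    have hmem : ∀ i : ℕ, D^[i] (r • m) ∈ S := by
      intro i
      induction i with
      | zero =>
        exact S.smul_mem r (Submodule.subset_span ⟨0, rfl⟩)
      | succ i ih =>
        rw [Function.iterate_succ_apply']
        exact hSD _ ih
    intro i
    exact hSker (hmem i)
  -- the candidate maximal submodule
  let V : Submodule R M :=
  { carrier := {m : M | ∀ i : ℕ, η (D^[i] m) = 0}
    zero_mem' := by intro i; rw [hiter0]; simp
    add_mem' := by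
      intro a b ha hb i
      rw [hiteradd, map_add, ha i, hb i, add_zero]
    smul_mem' := by
      intro r a ha
      exact hsmulkey r a ha }
  have hVcar : ∀ m : M, m ∈ V ↔ ∀ i : ℕ, η (D^[i] m) = 0 := fun m => Iff.rfl
  have hVset : V ∈ {N : Submodule R M | N ≤ LinearMap.ker η ∧ ∀ x ∈ N, D x ∈ N} := by
    constructor
    · intro m hm
      have := (hVcar m).mp hm 0
      simpa using this
    · intro x hx
      rw [hVcar] at hx ⊢
      intro i
      rw [← Function.iterate_succ_apply]
      exact hx (i + 1)
  have hle : ∀ N ∈ {N : Submodule R M | N ≤ LinearMap.ker η ∧ ∀ x ∈ N, D x ∈ N},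
      N ≤ V := by
    rintro N ⟨hNK, hND⟩ m hm
    have hiterN : ∀ i : ℕ, ∀ m ∈ N, D^[i] m ∈ N := by
      intro i
      induction i with
      | zero => intro m hm; simpa using hm
      | succ i ih =>
        intro m hm
        rw [Function.iterate_succ_apply]
        exact ih _ (hND m hm)
    rw [hVcar]
    intro i
    exact hNK (hiterN i m hm)
  have hUV : Umax = V := by
    rw [hUmax]
    exact le_antisymm (sSup_le hle) (le_sSup hVset)
  -- forward direction
  have fwd : ∀ k : ℕ, 1 ≤ k → ∀ β, (∀ i : ℕ, η (D^[i] β) = 0) → eta k β = 0 := by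
    intro k
    induction k with
    | zero => omega
    | succ k ih =>
      intro _ β hβ
      rcases Nat.eq_zero_or_pos k with hk | hk
      · subst hk
        rw [heta1]
        simpa using hβ 0
      · have hβD : ∀ i : ℕ, η (D^[i] (D β)) = 0 := by
          intro i
          rw [← Function.iterate_succ_apply]
          exact hβ (i + 1)
        rw [hetarec k hk β, ih hk β hβ, ih hk (D β) hβD, hD'0, sub_zero]
  -- preservation of the eta-vanishing hypothesis under D
  have hpres : ∀ β, (∀ k : ℕ, 1 ≤ k → eta k β = 0) →
      ∀ k : ℕ, 1 ≤ k → eta k (D β) = 0 := by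
    intro β hβ k hk
    have h1 := hetarec k hk β
    rw [hβ k hk, hβ (k + 1) (by omega), hD'0, zero_sub] at h1
    have := h1.symm
    rwa [neg_eq_zero] at this
  -- backward direction
  have bwd : ∀ (i : ℕ) (β : M), (∀ k : ℕ, 1 ≤ k → eta k β = 0) →
      η (D^[i] β) = 0 := by
    intro i
    induction i with
    | zero =>
      intro β hβ
      simp only [Function.iterate_zero, id_eq]
      rw [← heta1]
      exact hβ 1 le_rfl
    | succ i ih =>
      intro β hβ
      rw [Function.iterate_succ_apply]
      exact ih (D β) (hpres β hβ)
  intro α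
  rw [hUV, hVcar]
  constructor
  · intro h k hk
    exact fwd k hk α h
  · intro h i
    exact bwd i α h
end

section
/- For every α ∈ M and every integer n ≥ 1, the following three conditions are equivalent: (i) η(D^[j](α)) = 0 for all j with 0 ≤ j ≤ n−1; (ii) η^{(k)}(α) = 0 for all k with 1 ≤ k ≤ n; (iii) η^{(i)}(D^[j](α)) = 0 for all i ≥ 1 and j ≥ 0 with i + j ≤ n. (This is the formal core of the proof of Theorem 2.8 of the paper.) -/
/-- formal core of the proof of Theorem 2.8.
`M`, `M'` are additive commutative groups, `D : M → M`, `D' : M' → M'` and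
`η : M → M'` are additive maps, and `eta k` (for `k ≥ 1`) are the maps
`η^{(k)}` defined by `η^{(1)} = η`, `η^{(k+1)} = D' ∘ η^{(k)} − η^{(k)} ∘ D`.
For every `α ∈ M` and `n ≥ 1` the three vanishing conditions (i), (ii), (iii)
are equivalent. -/
theorem etas_vanish_tfae
    {M M' : Type*} [AddCommGroup M] [AddCommGroup M']
    (D : M → M) (hDadd : ∀ m n : M, D (m + n) = D m + D n)
    (D' : M' → M') (hD'add : ∀ m n : M', D' (m + n) = D' m + D' n)
    (η : M → M') (hηadd : ∀ m n : M, η (m + n) = η m + η n)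
    (eta : ℕ → M → M')
    (heta1 : ∀ m : M, eta 1 m = η m)
    (hetarec : ∀ k : ℕ, 1 ≤ k → ∀ m : M,
      eta (k + 1) m = D' (eta k m) - eta k (D m))
    (α : M) (n : ℕ) (hn : 1 ≤ n) :
    ((∀ j : ℕ, j < n → η (D^[j] α) = 0) ↔
        (∀ k : ℕ, 1 ≤ k → k ≤ n → eta k α = 0)) ∧
    ((∀ k : ℕ, 1 ≤ k → k ≤ n → eta k α = 0) ↔
        (∀ i j : ℕ, 1 ≤ i → i + j ≤ n → eta i (D^[j] α) = 0)) := by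
  have hD'0 : D' 0 = 0 := by
    have h := hD'add 0 0
    rw [add_zero] at h
    exact (left_eq_add.mp h)
  -- (i) → (iii)
  have h1 : (∀ j : ℕ, j < n → η (D^[j] α) = 0) →
      ∀ i j : ℕ, 1 ≤ i → i + j ≤ n → eta i (D^[j] α) = 0 := by
    intro h i
    induction i with
    | zero => intro j h0 _; omega
    | succ k ih =>
      intro j _ hsum
      rcases Nat.eq_zero_or_pos k with hk0 | hk1
      · subst hk0
        rw [heta1]
        exact h j (by omega)
      · rw [hetarec k hk1, ih j hk1 (by omega),
          ← Function.iterate_succ_apply' D j α, ih (j+1) hk1 (by omega),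
          hD'0, sub_zero]
  -- (ii) → (iii)
  have h3 : (∀ k : ℕ, 1 ≤ k → k ≤ n → eta k α = 0) →
      ∀ j i : ℕ, 1 ≤ i → i + j ≤ n → eta i (D^[j] α) = 0 := by
    intro h j
    induction j with
    | zero => intro i hi hsum; simpa using h i hi (by omega)
    | succ j ih =>
      intro i hi hsum
      have hrec := hetarec i hi (D^[j] α)
      have : eta i (D (D^[j] α)) = D' (eta i (D^[j] α)) - eta (i+1) (D^[j] α) := by
        rw [hrec]; abel
      rw [Function.iterate_succ_apply' D j α, this,
        ih i hi (by omega), ih (i+1) (by omega) (by omega), hD'0, sub_zero]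
  constructor
  · constructor
    · intro h k hk1 hkn
      simpa using h1 h k 0 hk1 (by omega)
    · intro h j hj
      rw [← heta1 (D^[j] α)]
      exact h3 h j 1 le_rfl (by omega)
  · constructor
    · intro h i j hi hsum
      exact h3 h j i hi hsum
    · intro h k hk1 hkn
      simpa using h k 0 hk1 (by omega)
end

section
/- Assume in addition that M is a Noetherian R-module. Let U be an R-submodule of M with D(U) ⊆ U, let α ∈ M, and for each integer n ≥ 0 let N_n denote the submodule of M generated by U together with D^[0](α), D^[1](α), …, D^[n](α). Then there exists an n ≥ 0 such that D(N_n) ⊆ N_n, and for such an n the submodule N_n is the smallest R-submodule N of M satisfying U ⊆ N, α ∈ N and D(N) ⊆ N. -/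
/-- Assume moreover that `M` is a Noetherian `R`-module.  With `N n` the join of a
`D`-stable submodule `U` with the span of `D^[0] α, …, D^[n] α`, there is an
`n` with `D(N n) ⊆ N n`, and for any such `n` the submodule `N n` is the
smallest submodule of `M` containing `U` and `α` that is stable under `D`. -/
theorem exists_stable_and_smallest
    {R M : Type*} [CommRing R] [AddCommGroup M] [Module R M]
    [IsNoetherian R M]
    (δ : R → R)
    (hδadd : ∀ r s : R, δ (r + s) = δ r + δ s)
    (hδmul : ∀ r s : R, δ (r * s) = δ r * s + r * δ s)
    (D : M → M)
    (hDadd : ∀ m n : M, D (m + n) = D m + D n)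
    (hDsmul : ∀ (r : R) (m : M), D (r • m) = δ r • m + r • D m)
    (U : Submodule R M) (hU : ∀ x ∈ U, D x ∈ U)
    (α : M)
    (N : ℕ → Submodule R M)
    (hN : ∀ n : ℕ, N n = U ⊔ Submodule.span R ((fun i => D^[i] α) '' Set.Iic n)) :
    (∃ n : ℕ, ∀ x ∈ N n, D x ∈ N n) ∧
    (∀ n : ℕ, (∀ x ∈ N n, D x ∈ N n) →
      (U ≤ N n ∧ α ∈ N n ∧
        ∀ N' : Submodule R M, U ≤ N' → α ∈ N' → (∀ x ∈ N', D x ∈ N') →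
          N n ≤ N')) := by
  have hD0 : D 0 = 0 := by
    have := hDadd 0 0
    simp at this
    linear_combination (norm := abel) this
  have hmono : Monotone N := by
    intro a b hab
    rw [hN a, hN b]
    exact sup_le_sup_left (Submodule.span_mono (Set.image_mono (Set.Iic_subset_Iic.2 hab))) _
  -- N n ≤ N m for n ≤ m
  have hle : ∀ n, N n ≤ N (n + 1) := fun n => hmono (Nat.le_succ n)
  -- D maps N n into N (n+1)
  have key : ∀ n, ∀ x ∈ N n, D x ∈ N (n + 1) := by
    intro n x hx
    have hspan : ∀ z ∈ Submodule.span R ((fun i => D^[i] α) '' Set.Iic n),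
        D z ∈ N (n + 1) := by
      intro z hz
      induction hz using Submodule.span_induction with
      | mem w hw =>
        obtain ⟨i, hi, rfl⟩ := hw
        rw [← Function.iterate_succ_apply' D i α, hN (n+1)]
        exact Submodule.mem_sup_right (Submodule.subset_span
          ⟨i + 1, Nat.succ_le_succ hi, rfl⟩)
      | zero => simp [hD0]
      | add a b ha hb iha ihb => rw [hDadd]; exact add_mem iha ihb
      | smul r a ha iha =>
        rw [hDsmul]
        refine add_mem (Submodule.smul_mem _ _ ?_) (Submodule.smul_mem _ _ iha)
        exact hle n (by rw [hN n]; exact Submodule.mem_sup_right ha)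
    rw [hN n] at hx
    obtain ⟨y, hy, z, hz, rfl⟩ := Submodule.mem_sup.1 hx
    rw [hDadd]
    exact add_mem (hle n (by rw [hN n]; exact Submodule.mem_sup_left (hU y hy))) (hspan z hz)
  constructor
  · -- existence: the monotone chain stabilizes
    obtain ⟨n, hn⟩ := monotone_stabilizes_iff_noetherian.2 ‹IsNoetherian R M› ⟨N, hmono⟩
    refine ⟨n, fun x hx => ?_⟩
    have := key n x hx
    rw [show N n = N (n+1) from hn (n + 1) (Nat.le_succ n)]; exact this
  · intro n hDn
    have hUle : U ≤ N n := by rw [hN n]; exact le_sup_left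
    have hαmem : α ∈ N n := by
      rw [hN n]
      exact Submodule.mem_sup_right (Submodule.subset_span ⟨0, Nat.zero_le n, rfl⟩)
    refine ⟨hUle, hαmem, fun N' hUN' hαN' hDN' => ?_⟩
    have hiter : ∀ i, D^[i] α ∈ N' := by
      intro i
      induction i with
      | zero => simpa
      | succ k ih => rw [Function.iterate_succ_apply']; exact hDN' _ ih
    rw [hN n]
    refine sup_le hUN' (Submodule.span_le.2 ?_)
    rintro _ ⟨i, _, rfl⟩
    exact hiter i
end

section
/- Assume: (i) Dx(a) = g·Dx'(a) and Dt(a) = h·Dx'(a) + Dt'(a) for all a ∈ A; (ii) Dx̄(a) = ḡ·Dx̄'(a) for all a ∈ A; (iii) Dx̄(g) = 0 and Dx̄(h) = 0; (iv) Dx(ḡ) = 0 and Dt(ḡ) = 0; (v) Dt(g) = Dx(h). Set Z' := Z·g + h. Then Z'·Dx'(Dx̄'(Z')) + Dt'(Dx̄'(Z')) − Dx'(Z')·Dx̄'(Z') = g·ḡ⁻¹·( Z·Dx(Dx̄(Z)) + Dt(Dx̄(Z)) − Dx(Z)·Dx̄(Z) ). (This is the algebraic identity at the core of Lemma 3.6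 of the paper, proving that the expression defining the second-order Kodaira–Spencer form μ is independent of the choice of local coordinates.) -/
/-- A derivation of a commutative ring: an additive map satisfying the
Leibniz rule. -/
def IsDerivationOn {A : Type*} [CommRing A] (L : A → A) : Prop :=
  (∀ a b : A, L (a + b) = L a + L b) ∧ (∀ a b : A, L (a * b) = L a * b + a * L b)

/-- algebraic core of Lemma 3.6: coordinate invariance of the
expression defining the second-order Kodaira–Spencer form `μ`. -/
theorem mu_coordinate_invariance
    {A : Type*} [CommRing A]
    (Dx Dt Dxb Dx' Dt' Dxb' : A → A)
    (hDx : IsDerivationOn Dx) (hDt : IsDerivationOn Dt)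
    (hDxb : IsDerivationOn Dxb) (hDx' : IsDerivationOn Dx')
    (hDt' : IsDerivationOn Dt') (hDxb' : IsDerivationOn Dxb')
    (g gb h Z : A) [Invertible g] [Invertible gb]
    (hchx : ∀ a : A, Dx a = g * Dx' a)
    (hcht : ∀ a : A, Dt a = h * Dx' a + Dt' a)
    (hchxb : ∀ a : A, Dxb a = gb * Dxb' a)
    (hgb_hol : Dxb g = 0) (hhb_hol : Dxb h = 0)
    (hgb_x : Dx gb = 0) (hgb_t : Dt gb = 0)
    (hcompat : Dt g = Dx h)
    (Z' : A) (hZ' : Z' = Z * g + h) :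
    Z' * Dx' (Dxb' Z') + Dt' (Dxb' Z') - Dx' Z' * Dxb' Z'
      = g * ⅟gb * (Z * Dx (Dxb Z) + Dt (Dxb Z) - Dx Z * Dxb Z) := by
  obtain ⟨ax', lx'⟩ := hDx'
  obtain ⟨at', lt'⟩ := hDt'
  obtain ⟨axb', lxb'⟩ := hDxb'
  have hDxb'g : Dxb' g = 0 := by
    have h1 : gb * Dxb' g = 0 := by rw [← hchxb]; exact hgb_hol
    calc Dxb' g = ⅟gb * (gb * Dxb' g) := (invOf_mul_cancel_left gb (Dxb' g)).symm
      _ = 0 := by rw [h1, mul_zero]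
  have hDxb'h : Dxb' h = 0 := by
    have h1 : gb * Dxb' h = 0 := by rw [← hchxb]; exact hhb_hol
    calc Dxb' h = ⅟gb * (gb * Dxb' h) := (invOf_mul_cancel_left gb (Dxb' h)).symm
      _ = 0 := by rw [h1, mul_zero]
  have hDx'gb : Dx' gb = 0 := by
    have h1 : g * Dx' gb = 0 := by rw [← hchx]; exact hgb_x
    calc Dx' gb = ⅟g * (g * Dx' gb) := (invOf_mul_cancel_left g (Dx' gb)).symm
      _ = 0 := by rw [h1, mul_zero]
  have hDt'gb : Dt' gb = 0 := by
    have h1 : h * Dx' gb + Dt' gb = 0 := by rw [← hcht]; exact hgb_t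
    rw [hDx'gb, mul_zero, zero_add] at h1
    exact h1
  have hc : h * Dx' g + Dt' g = g * Dx' h := by
    rw [← hcht, ← hchx]; exact hcompat
  subst hZ'
  have e1 : Dxb' (Z * g + h) = Dxb' Z * g := by
    rw [axb', lxb', hDxb'g, hDxb'h]; ring
  rw [e1, hchxb Z, hchx (gb * Dxb' Z), hcht (gb * Dxb' Z), hchx Z,
    lx' gb, lt' gb, hDx'gb, hDt'gb,
    lx' (Dxb' Z) g, lt' (Dxb' Z) g, ax' (Z * g) h, lx' Z g]
  have hgb : ⅟gb * gb = 1 := invOf_mul_self gb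
  linear_combination (Dxb' Z) * hc -
    (g * (Z * (g * Dx' (Dxb' Z)) + (h * Dx' (Dxb' Z) + Dt' (Dxb' Z)) - g * Dx' Z * Dxb' Z)) * hgb
end
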